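/- Let n ≥ 1, let S_n be the star graph on vertices {0,1,...,n-1}, and let M be one of IEnd(S_n), PEnd(S_n), PwEnd(S_n). For α, β ∈ M, α L β in M (Green's L-relation) if and only if one of the following holds: (1) im(α) = im(β) and |im(α)| ≤ 1; (2) im(α) = im(β), |im(α)| ≥ 2, and (0 ∈ dom(α) iff 0 ∈ dom(β)). -/

import Mathlib

def pmul {V : Type*} (f g : V → Option V) : V → Option V := fun x => (f x).bind g

def pdom {V : Type*} (f : V → Option V) : Set V := {x | f x ≠ none}

def pim {V : Type*} (f : V → Option V) : Set V := {y | ∃ x, f x = some y}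

def pker {V : Type*} (f : V → Option V) : V → V → Prop := fun x y => f x ≠ none ∧ f x = f y

def PInj {V : Type*} (f : V → Option V) : Prop := ∀ u v a, f u = some a → f v = some a → u = v

def edge {n : ℕ} (u v : Fin n) : Prop := (u.val = 0 ∧ v.val ≠ 0) ∨ (v.val = 0 ∧ u.val ≠ 0)

def IsPEnd {n : ℕ} (α : Fin n → Option (Fin n)) : Prop :=
  ∀ u v a b, α u = some a → α v = some b → edge u v → edge a b

def IsPwEnd {n : ℕ} (α : Fin n → Option (Fin n)) : Prop :=
  ∀ u v a b, α u = some a → α v = some b → edge u v → a ≠ b → edge a b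

def IsPsEnd {n : ℕ} (α : Fin n → Option (Fin n)) : Prop :=
  ∀ u v a b, α u = some a → α v = some b → (edge u v ↔ edge a b)

def IsPswEnd {n : ℕ} (α : Fin n → Option (Fin n)) : Prop :=
  ∀ u v a b, α u = some a → α v = some b → ((edge u v ∧ a ≠ b) ↔ edge a b)

def PEndS (n : ℕ) : Set (Fin n → Option (Fin n)) := {α | IsPEnd α}
def PwEndS (n : ℕ) : Set (Fin n → Option (Fin n)) := {α | IsPwEnd α}
def PsEndS (n : ℕ) : Set (Fin n → Option (Fin n)) := {α | IsPsEnd α}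
def PswEndS (n : ℕ) : Set (Fin n → Option (Fin n)) := {α | IsPswEnd α}
def IEndS (n : ℕ) : Set (Fin n → Option (Fin n)) := {α | PInj α ∧ IsPEnd α}
def PAutS (n : ℕ) : Set (Fin n → Option (Fin n)) := {α | PInj α ∧ IsPsEnd α}

def RegularIn {V : Type*} (M : Set (V → Option V)) (a : V → Option V) : Prop :=
  ∃ b ∈ M, pmul (pmul a b) a = a

def GreenL {V : Type*} (M : Set (V → Option V)) (a b : V → Option V) : Prop :=
  (∃ g ∈ M, a = pmul g b) ∧ (∃ g ∈ M, b = pmul g a)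

def GreenR {V : Type*} (M : Set (V → Option V)) (a b : V → Option V) : Prop :=
  (∃ g ∈ M, a = pmul b g) ∧ (∃ g ∈ M, b = pmul a g)

def GreenH {V : Type*} (M : Set (V → Option V)) (a b : V → Option V) : Prop :=
  GreenL M a b ∧ GreenR M a b

def GreenJ {V : Type*} (M : Set (V → Option V)) (a b : V → Option V) : Prop :=
  (∃ g ∈ M, ∃ h ∈ M, a = pmul (pmul g b) h) ∧ (∃ g ∈ M, ∃ h ∈ M, b = pmul (pmul g a) h)

lemma edge_symm {n : ℕ} {u v : Fin n} (h : edge u v) : edge v u :=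
  h.elim (fun h => Or.inr ⟨h.1, h.2⟩) (fun h => Or.inl ⟨h.1, h.2⟩)

lemma edge_ne {n : ℕ} {u v : Fin n} (h : edge u v) : u ≠ v := by
  rcases h with ⟨h1, h2⟩ | ⟨h1, h2⟩ <;> intro he <;> subst he <;> exact h2 h1

lemma pend_pwend {n : ℕ} {α : Fin n → Option (Fin n)} (h : IsPEnd α) : IsPwEnd α :=
  fun u v a b hu hv he _ => h u v a b hu hv he

lemma star_im {n : ℕ} (hn : 1 ≤ n) {β : Fin n → Option (Fin n)} (hβ : IsPwEnd β)
    {c : Fin n} (hc : β ⟨0, hn⟩ = some c) (hc0 : c.val ≠ 0) :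
    ∀ y u, β u = some y → y = c ∨ y = ⟨0, hn⟩ := by
  intro y u hu
  by_cases huz : u = ⟨0, hn⟩
  · subst huz; rw [hu] at hc; exact Or.inl (Option.some_injective _ hc)
  · have huv : u.val ≠ 0 := fun h => huz (Fin.ext h)
    by_cases hyc : y = c
    · exact Or.inl hyc
    · have hedge := hβ ⟨0, hn⟩ u c y hc hu (Or.inl ⟨rfl, huv⟩) (fun h => hyc h.symm)
      rcases hedge with ⟨h1, _⟩ | ⟨h1, _⟩
      · exact absurd h1 hc0
      · exact Or.inr (Fin.ext h1)

lemma pim_pmul_subset {V : Type*} (g β : V → Option V) : pim (pmul g β) ⊆ pim β := by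
  rintro y ⟨x, hx⟩
  have hx' : (g x).bind β = some y := hx
  obtain ⟨u, _, hu2⟩ := Option.bind_eq_some_iff.mp hx'
  exact ⟨u, hu2⟩

lemma dom_forward {n : ℕ} (hn : 1 ≤ n) {α β h : Fin n → Option (Fin n)}
    (hh : IsPwEnd h) (hfac : β = pmul h α) (h2 : 2 ≤ (pim β).ncard)
    (hz : β ⟨0, hn⟩ ≠ none) : α ⟨0, hn⟩ ≠ none := by
  have hb : (h ⟨0, hn⟩).bind α ≠ none := by rw [hfac] at hz; exact hz
  obtain ⟨w, hw⟩ : ∃ w, h ⟨0, hn⟩ = some w := by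
    cases hhz : h ⟨0, hn⟩ with
    | none => rw [hhz] at hb; exact absurd rfl hb
    | some w => exact ⟨w, rfl⟩
  rw [hw] at hb
  obtain ⟨t, ht⟩ : ∃ t, α w = some t := by
    cases hαw : α w with
    | none => rw [Option.bind_some, hαw] at hb; exact absurd rfl hb
    | some t => exact ⟨t, rfl⟩
  by_cases hwz : w = ⟨0, hn⟩
  · rw [hwz] at ht; rw [ht]; exact Option.some_ne_none _
  · have hwv : w.val ≠ 0 := fun h => hwz (Fin.ext h)
    by_contra hcon
    have hcon' : α ⟨0, hn⟩ = none := hcon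
    have hsub : pim β ⊆ {t} := by
      rintro y ⟨x, hx⟩
      have hx' : (h x).bind α = some y := by rw [hfac] at hx; exact hx
      obtain ⟨u, hu1, hu2⟩ := Option.bind_eq_some_iff.mp hx'
      rcases star_im hn hh hw hwv u x hu1 with rfl | rfl
      · rw [ht] at hu2; exact Option.some_injective _ hu2.symm
      · rw [hcon'] at hu2; exact absurd hu2 (Option.some_ne_none _).symm
    have := (Set.ncard_le_ncard hsub (Set.finite_singleton t)).trans_eq (Set.ncard_singleton t)
    omega

lemma factor {n : ℕ} (hn : 1 ≤ n) {α β : Fin n → Option (Fin n)}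
    (hαw : IsPwEnd α) (hβw : IsPwEnd β) (him : pim α = pim β)
    (hkey : ∀ v a0 av : Fin n, v.val ≠ 0 → α ⟨0, hn⟩ = some a0 → α v = some av →
      a0 ≠ av → β ⟨0, hn⟩ ≠ none) :
    ∃ g : Fin n → Option (Fin n),
      IsPwEnd g ∧ (IsPEnd α → IsPEnd g) ∧ (PInj α → PInj g) ∧ α = pmul g β := by
  classical
  set z : Fin n := ⟨0, hn⟩ with hzdef
  set P : Fin n → Option (Fin n) := fun y =>
    if β z = some y then some z
    else if h : ∃ u, β u = some y then some (Classical.choose h) else none with hPdef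
  have p1 : ∀ y u, P y = some u → β u = some y := by
    intro y u h
    simp only [hPdef] at h
    split_ifs at h with h1 h2
    · rw [Option.some.injEq] at h; rw [← h]; exact h1
    · rw [Option.some.injEq] at h; rw [← h]; exact Classical.choose_spec h2
  have p2 : ∀ y, (∃ u, β u = some y) → ∃ u, P y = some u := by
    intro y hy
    simp only [hPdef]
    split_ifs with h1
    · exact ⟨z, rfl⟩
    · exact ⟨_, rfl⟩
  have p3 : ∀ y u, P y = some u → u = z → β z = some y := by
    intro y u h hu
    have := p1 y u h; rwa [hu] at this
  have p4 : ∀ y u, P y = some u → β z = some y → u = z := by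
    intro y u h hb
    simp only [hPdef, if_pos hb] at h
    exact (Option.some_injective _ h).symm
  have hcore : ∀ v a0 av a b : Fin n, v.val ≠ 0 → α z = some a0 → α v = some av →
      P a0 = some a → P av = some b → a0 ≠ av → edge a b := by
    intro v a0 av a b hv h0 hA hPa hPb hne
    obtain ⟨c, hc⟩ : ∃ c, β z = some c := by
      have hk := hkey v a0 av hv h0 hA hne
      cases hbz : β z with
      | none => exact absurd hbz hk
      | some c => exact ⟨c, rfl⟩
    have hedge0 : edge a0 av := hαw z v a0 av h0 hA (Or.inl ⟨rfl, hv⟩) hne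
    have haz : a = z ↔ a0 = c := by
      constructor
      · intro h
        have := p3 a0 a hPa h
        rw [hc] at this
        exact (Option.some_injective _ this.symm)
      · intro h; exact p4 a0 a hPa (by rw [h]; exact hc)
    have hbz2 : b = z ↔ av = c := by
      constructor
      · intro h
        have := p3 av b hPb h
        rw [hc] at this
        exact (Option.some_injective _ this.symm)
      · intro h; exact p4 av b hPb (by rw [h]; exact hc)
    have hone : (a0 = c ∧ av ≠ c) ∨ (av = c ∧ a0 ≠ c) := by
      by_cases hcz : c.val = 0
      · rcases hedge0 with ⟨h1, h2⟩ | ⟨h1, h2⟩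
        · left
          refine ⟨Fin.ext (by rw [h1, hcz]), fun h => h2 ?_⟩
          rw [h]; exact hcz
        · right
          refine ⟨Fin.ext (by rw [h1, hcz]), fun h => h2 ?_⟩
          rw [h]; exact hcz
      · have hsi := star_im hn hβw hc hcz
        obtain ⟨u0, hu0⟩ : ∃ u, β u = some a0 := by
          have hm : a0 ∈ pim α := ⟨z, h0⟩
          rw [him] at hm; exact hm
        obtain ⟨u1, hu1⟩ : ∃ u, β u = some av := by
          have hm : av ∈ pim α := ⟨v, hA⟩
          rw [him] at hm; exact hm
        rcases hsi a0 u0 hu0 with h1 | h1 <;> rcases hsi av u1 hu1 with h2 | h2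
        · exact absurd (h1.trans h2.symm) hne
        · left; refine ⟨h1, fun hcc => hcz ?_⟩; rw [← hcc, h2]
        · right; refine ⟨h2, fun hcc => hcz ?_⟩; rw [← hcc, h1]
        · exact absurd (h1.trans h2.symm) hne
    rcases hone with ⟨h1, h2⟩ | ⟨h1, h2⟩
    · have ha : a = z := haz.mpr h1
      have hb : b ≠ z := fun h => h2 (hbz2.mp h)
      exact Or.inl ⟨by rw [ha], fun h => hb (Fin.ext h)⟩
    · have hb : b = z := hbz2.mpr h1
      have ha : a ≠ z := fun h => h2 (haz.mp h)
      exact Or.inr ⟨by rw [hb], fun h => ha (Fin.ext h)⟩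
  refine ⟨fun x => (α x).bind P, ?_, ?_, ?_, ?_⟩
  · intro u v a b hu hv he hne
    obtain ⟨y1, hy1, hPy1⟩ := Option.bind_eq_some_iff.mp hu
    obtain ⟨y2, hy2, hPy2⟩ := Option.bind_eq_some_iff.mp hv
    have hy12 : y1 ≠ y2 := by
      rintro rfl; rw [hPy1] at hPy2; exact hne (Option.some_injective _ hPy2)
    rcases he with ⟨h1, h2⟩ | ⟨h1, h2⟩
    · have hu' : u = z := Fin.ext h1
      rw [hu'] at hy1
      exact hcore v y1 y2 a b h2 hy1 hy2 hPy1 hPy2 hy12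
    · have hv' : v = z := Fin.ext h1
      rw [hv'] at hy2
      exact edge_symm (hcore u y2 y1 b a h2 hy2 hy1 hPy2 hPy1 (Ne.symm hy12))
  · intro hαP u v a b hu hv he
    obtain ⟨y1, hy1, hPy1⟩ := Option.bind_eq_some_iff.mp hu
    obtain ⟨y2, hy2, hPy2⟩ := Option.bind_eq_some_iff.mp hv
    have hy12 : y1 ≠ y2 := edge_ne (hαP u v y1 y2 hy1 hy2 he)
    rcases he with ⟨h1, h2⟩ | ⟨h1, h2⟩
    · have hu' : u = z := Fin.ext h1
      rw [hu'] at hy1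
      exact hcore v y1 y2 a b h2 hy1 hy2 hPy1 hPy2 hy12
    · have hv' : v = z := Fin.ext h1
      rw [hv'] at hy2
      exact edge_symm (hcore u y2 y1 b a h2 hy2 hy1 hPy2 hPy1 (Ne.symm hy12))
  · intro hinj u v a hu hv
    obtain ⟨y1, hy1, hPy1⟩ := Option.bind_eq_some_iff.mp hu
    obtain ⟨y2, hy2, hPy2⟩ := Option.bind_eq_some_iff.mp hv
    have hyy : y1 = y2 := by
      have b1 := p1 y1 a hPy1
      have b2 := p1 y2 a hPy2
      rw [b1] at b2
      exact Option.some_injective _ b2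
    rw [← hyy] at hy2
    exact hinj u v y1 hy1 hy2
  · funext x
    show α x = ((α x).bind P).bind β
    cases hx : α x with
    | none => simp
    | some y =>
      obtain ⟨u, hu⟩ : ∃ u, P y = some u := by
        refine p2 y ?_
        have hm : y ∈ pim α := ⟨x, hx⟩
        rw [him] at hm; exact hm
      rw [Option.bind_some, hu, Option.bind_some, p1 y u hu]

theorem stmt15 (n : ℕ) (hn : 1 ≤ n) (M : Set (Fin n → Option (Fin n)))
    (hM : M = IEndS n ∨ M = PEndS n ∨ M = PwEndS n)
    (α β : Fin n → Option (Fin n)) (hα : α ∈ M) (hβ : β ∈ M) :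
    GreenL M α β ↔
      ((pim α = pim β ∧ (pim α).ncard ≤ 1)
        ∨ (pim α = pim β ∧ 2 ≤ (pim α).ncard
            ∧ ((⟨0, hn⟩ : Fin n) ∈ pdom α ↔ (⟨0, hn⟩ : Fin n) ∈ pdom β))) := by
  have hMw : ∀ γ, γ ∈ M → IsPwEnd γ := by
    rcases hM with rfl | rfl | rfl
    · exact fun γ hγ => pend_pwend hγ.2
    · exact fun γ hγ => pend_pwend hγ
    · exact fun γ hγ => hγ
  constructor
  · rintro ⟨⟨g, hgM, hg⟩, ⟨h, hhM, hh⟩⟩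
    have him : pim α = pim β := by
      apply Set.Subset.antisymm
      · rw [hg]; exact pim_pmul_subset g β
      · rw [hh]; exact pim_pmul_subset h α
    by_cases hc : (pim α).ncard ≤ 1
    · exact Or.inl ⟨him, hc⟩
    · have h2 : 2 ≤ (pim α).ncard := by omega
      refine Or.inr ⟨him, h2, ?_, ?_⟩
      · intro hd
        exact dom_forward hn (hMw g hgM) hg h2 hd
      · intro hd
        exact dom_forward hn (hMw h hhM) hh (him ▸ h2) hd
  · intro H
    have him : pim α = pim β := by rcases H with ⟨h1, _⟩ | ⟨h1, _⟩ <;> exact h1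
    have key1 : ∀ v a0 av : Fin n, v.val ≠ 0 → α ⟨0, hn⟩ = some a0 → α v = some av →
        a0 ≠ av → β ⟨0, hn⟩ ≠ none := by
      intro v a0 av hv h0 hA hne
      rcases H with ⟨_, h1⟩ | ⟨_, _, hiff⟩
      · exfalso
        have hsub : ({a0, av} : Set (Fin n)) ⊆ pim α := by
          rintro y (rfl | rfl)
          exacts [⟨_, h0⟩, ⟨_, hA⟩]
        have hle := Set.ncard_le_ncard hsub (Set.toFinite _)
        rw [Set.ncard_pair hne] at hle
        omega
      · have hz : (⟨0, hn⟩ : Fin n) ∈ pdom α := by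
          simp only [pdom, Set.mem_setOf_eq, h0]
          exact Option.some_ne_none _
        exact hiff.mp hz
    have key2 : ∀ v a0 av : Fin n, v.val ≠ 0 → β ⟨0, hn⟩ = some a0 → β v = some av →
        a0 ≠ av → α ⟨0, hn⟩ ≠ none := by
      intro v a0 av hv h0 hA hne
      rcases H with ⟨_, h1⟩ | ⟨_, _, hiff⟩
      · exfalso
        have hsub : ({a0, av} : Set (Fin n)) ⊆ pim β := by
          rintro y (rfl | rfl)
          exacts [⟨_, h0⟩, ⟨_, hA⟩]
        have hle := Set.ncard_le_ncard hsub (Set.toFinite _)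
        rw [Set.ncard_pair hne, ← him] at hle
        omega
      · have hz : (⟨0, hn⟩ : Fin n) ∈ pdom β := by
          simp only [pdom, Set.mem_setOf_eq, h0]
          exact Option.some_ne_none _
        exact hiff.mpr hz
    obtain ⟨g, hgw, hgp, hgi, hgf⟩ := factor hn (hMw α hα) (hMw β hβ) him key1
    obtain ⟨h, hhw, hhp, hhi, hhf⟩ := factor hn (hMw β hβ) (hMw α hα) him.symm key2
    refine ⟨⟨g, ?_, hgf⟩, ⟨h, ?_, hhf⟩⟩
    · rcases hM with rfl | rfl | rfl
      · exact ⟨hgi hα.1, hgp hα.2⟩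
      · exact hgp hα
      · exact hgw
    · rcases hM with rfl | rfl | rfl
      · exact ⟨hhi hβ.1, hhp hβ.2⟩
      · exact hhp hβ
      · exact hhw
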